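/- Let A be a path connected subset of the Manhattan plane ℝ₁² and p ∈ ℝ₁². If every one of the four quadrants of p contains a point of A, then p belongs to the double hatching L(A) of A. -/

import Mathlib

open Set

/-- The taxicab (ℓ¹) distance on the plane, making `ℝ × ℝ` the Manhattan plane ℝ₁². -/
def taxiDist (p q : ℝ × ℝ) : ℝ := |p.1 - q.1| + |p.2 - q.2|

/-- Horizontal hatching `L_x(A)`. -/
def hatchX (A : Set (ℝ × ℝ)) : Set (ℝ × ℝ) :=
  {p | ∃ a ∈ A, ∃ b ∈ A, a.2 = p.2 ∧ b.2 = p.2 ∧ a.1 ≤ p.1 ∧ p.1 ≤ b.1}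

/-- Vertical hatching `L_y(A)`. -/
def hatchY (A : Set (ℝ × ℝ)) : Set (ℝ × ℝ) :=
  {p | ∃ a ∈ A, ∃ b ∈ A, a.1 = p.1 ∧ b.1 = p.1 ∧ a.2 ≤ p.2 ∧ p.2 ≤ b.2}

/-- Double hatching `L(A) = L_x(L_y(A))`. -/
def doubleHatch (A : Set (ℝ × ℝ)) : Set (ℝ × ℝ) := hatchX (hatchY A)

/-- The real sign `+1` or `-1` associated to a Boolean sign. -/
def sgn (ε : Bool) : ℝ := if ε then 1 else -1

/-- The `ε₁ε₂`-quadrant of the point `p`: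
`Q_p^{ε₁ε₂} = {q | ε₁(q₁ - p₁) ≥ 0 ∧ ε₂(q₂ - p₂) ≥ 0}`. -/
def quadrant (p : ℝ × ℝ) (ε₁ ε₂ : Bool) : Set (ℝ × ℝ) :=
  {q | 0 ≤ sgn ε₁ * (q.1 - p.1) ∧ 0 ≤ sgn ε₂ * (q.2 - p.2)}

/-- If `u` starts nonpositive, `v` changes sign from `≤ 0` to `≥ 0`, and `u` is positive at
every zero of `v`, then at some time `u` vanishes while `v` is still nonpositive. -/
lemma half_aux (u v : ℝ → ℝ) (hu : Continuous u) (hv : Continuous v)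
    (h0 : v 0 ≤ 0) (h1 : 0 ≤ v 1) (hu0 : u 0 ≤ 0)
    (hcross : ∀ t ∈ Icc (0:ℝ) 1, v t = 0 → 0 < u t) :
    ∃ t ∈ Icc (0:ℝ) 1, u t = 0 ∧ v t ≤ 0 := by
  have hZne : ∃ t ∈ Icc (0:ℝ) 1, v t = 0 := by
    have := intermediate_value_Icc (zero_le_one) hv.continuousOn
    obtain ⟨t, ht, hvt⟩ := this ⟨h0, h1⟩
    exact ⟨t, ht, hvt⟩
  set Z : Set ℝ := {t | t ∈ Icc (0:ℝ) 1 ∧ v t = 0} with hZ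
  have hZclosed : IsClosed Z := by
    have : Z = Icc (0:ℝ) 1 ∩ v ⁻¹' {0} := by ext t; simp [hZ, Set.mem_inter_iff]
    rw [this]
    exact isClosed_Icc.inter (isClosed_singleton.preimage hv)
  have hZne' : Z.Nonempty := by obtain ⟨t, ht, hvt⟩ := hZne; exact ⟨t, ht, hvt⟩
  have hZbdd : BddBelow Z := ⟨0, fun t ht => ht.1.1⟩
  set s := sInf Z with hs
  have hsZ : s ∈ Z := hZclosed.csInf_mem hZne' hZbdd
  have hsIcc : s ∈ Icc (0:ℝ) 1 := hsZ.1
  have hus : 0 < u s := hcross s hsIcc hsZ.2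
  obtain ⟨t₀, ht₀, hut₀⟩ : ∃ t ∈ Icc (0:ℝ) s, u t = 0 :=
    intermediate_value_Icc hsIcc.1 hu.continuousOn ⟨hu0, hus.le⟩
  have ht₀Icc : t₀ ∈ Icc (0:ℝ) 1 := ⟨ht₀.1, ht₀.2.trans hsIcc.2⟩
  refine ⟨t₀, ht₀Icc, hut₀, ?_⟩
  by_contra hpos
  push_neg at hpos
  obtain ⟨t', ht', hvt'⟩ : ∃ t ∈ Icc (0:ℝ) t₀, v t = 0 :=
    intermediate_value_Icc ht₀.1 hv.continuousOn ⟨h0, hpos.le⟩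
  have ht's : t' < s := by
    have : t₀ < s := by
      rcases lt_or_eq_of_le ht₀.2 with h | h
      · exact h
      · exfalso; rw [h] at hut₀; rw [hut₀] at hus; exact lt_irrefl 0 hus
    exact lt_of_le_of_lt ht'.2 this
  have : s ≤ t' := csInf_le hZbdd ⟨⟨ht'.1, ht'.2.trans ht₀Icc.2⟩, hvt'⟩
  linarith

/-- If a continuous curve inside `A` joins a point below the horizontal line through `p`
to a point above it, both endpoints lying weakly on the `σ`-negative side of the vertical
line through `p`, while every point of `A` on the horizontal line lies strictly on the
`σ`-positive side, then `p` lies in the vertical hatching of `A`. -/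
lemma mem_hatchY_aux (A : Set (ℝ × ℝ)) (p : ℝ × ℝ) (σ : ℝ) (hσ : σ ≠ 0)
    (f : ℝ → ℝ × ℝ) (hf : Continuous f)
    (hmem : ∀ t ∈ Icc (0:ℝ) 1, f t ∈ A)
    (hc2 : (f 0).2 ≤ p.2) (hd2 : p.2 ≤ (f 1).2)
    (hc1 : σ * ((f 0).1 - p.1) ≤ 0) (hd1 : σ * ((f 1).1 - p.1) ≤ 0)
    (hcross : ∀ q ∈ A, q.2 = p.2 → 0 < σ * (q.1 - p.1)) :
    p ∈ hatchY A := by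
  have hu : Continuous fun t => σ * ((f t).1 - p.1) :=
    continuous_const.mul ((continuous_fst.comp hf).sub continuous_const)
  have hv : Continuous fun t => (f t).2 - p.2 :=
    (continuous_snd.comp hf).sub continuous_const
  obtain ⟨t₀, ht₀, hut₀, hvt₀⟩ :=
    half_aux (fun t => σ * ((f t).1 - p.1)) (fun t => (f t).2 - p.2) hu hv
      (by simpa using hc2) (by simpa using hd2) hc1
      (fun t ht hvt => hcross _ (hmem t ht) (by linarith [sub_eq_zero.mp hvt]))
  have h1' : (f t₀).1 = p.1 := by
    rcases mul_eq_zero.mp hut₀ with h | h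
    · exact absurd h hσ
    · linarith [sub_eq_zero.mp h]
  set g : ℝ → ℝ × ℝ := fun t => f (1 - t) with hg
  have hgc : Continuous g := hf.comp (continuous_const.sub continuous_id)
  have hgmem : ∀ t ∈ Icc (0:ℝ) 1, g t ∈ A := fun t ht =>
    hmem (1 - t) ⟨by linarith [ht.2], by linarith [ht.1]⟩
  have hu' : Continuous fun t => σ * ((g t).1 - p.1) :=
    continuous_const.mul ((continuous_fst.comp hgc).sub continuous_const)
  have hv' : Continuous fun t => p.2 - (g t).2 :=
    continuous_const.sub (continuous_snd.comp hgc)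
  obtain ⟨t₁, ht₁, hut₁, hvt₁⟩ :=
    half_aux (fun t => σ * ((g t).1 - p.1)) (fun t => p.2 - (g t).2) hu' hv'
      (by simp only [hg]; norm_num; linarith) (by simp only [hg]; norm_num; linarith)
      (by simp only [hg]; norm_num; linarith)
      (fun t ht hvt => hcross _ (hgmem t ht) (by linarith [sub_eq_zero.mp hvt]))
  have h1'' : (g t₁).1 = p.1 := by
    rcases mul_eq_zero.mp hut₁ with h | h
    · exact absurd h hσ
    · linarith [sub_eq_zero.mp h]
  exact ⟨f t₀, hmem t₀ ht₀, g t₁, hgmem t₁ ht₁, h1', h1'', by linarith, by linarith⟩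

/-- Every point of `A` is in `hatchY A`. -/
lemma self_mem_hatchY {A : Set (ℝ × ℝ)} {q : ℝ × ℝ} (hq : q ∈ A) : q ∈ hatchY A :=
  ⟨q, hq, q, hq, rfl, rfl, le_refl _, le_refl _⟩

/-- If `A` is path connected and every one of the four quadrants of `p` contains a point
of `A`, then `p` belongs to the double hatching `L(A)`. -/
theorem mem_doubleHatch_of_quadrants (A : Set (ℝ × ℝ)) (hA : IsPathConnected A)
    (p : ℝ × ℝ) (h : ∀ ε₁ ε₂ : Bool, (A ∩ quadrant p ε₁ ε₂).Nonempty) :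
    p ∈ doubleHatch A := by
  obtain ⟨a, haA, ha⟩ := h false false
  obtain ⟨b, hbA, hb⟩ := h false true
  obtain ⟨c, hcA, hc⟩ := h true false
  obtain ⟨d, hdA, hd⟩ := h true true
  simp only [quadrant, sgn, if_pos, if_neg, Set.mem_setOf_eq] at ha hb hc hd
  norm_num at ha hb hc hd
  -- ha : a.1 ≤ p.1 ∧ a.2 ≤ p.2 (after massaging), etc.
  by_cases hR : ∃ q ∈ A, q.2 = p.2 ∧ p.1 ≤ q.1
  · by_cases hL : ∃ q ∈ A, q.2 = p.2 ∧ q.1 ≤ p.1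
    · obtain ⟨e, heA, he2, he1⟩ := hL
      obtain ⟨r, hrA, hr2, hr1⟩ := hR
      exact ⟨e, self_mem_hatchY heA, r, self_mem_hatchY hrA, he2, hr2, he1, hr1⟩
    · push_neg at hL
      obtain ⟨γ, hγ⟩ := hA.joinedIn a haA b hbA
      have hmem : ∀ t ∈ Icc (0:ℝ) 1, γ.extend t ∈ A := fun t ht => by
        rw [γ.extend_apply ht]; exact hγ _
      have hp : p ∈ hatchY A := by
        refine mem_hatchY_aux A p 1 one_ne_zero γ.extend γ.continuous_extend hmem ?_ ?_ ?_ ?_ ?_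
        · rw [γ.extend_zero]; linarith [ha.2]
        · rw [γ.extend_one]; linarith [hb.2]
        · rw [γ.extend_zero]; linarith [ha.1]
        · rw [γ.extend_one]; linarith [hb.1]
        · intro q hqA hq2
          have := hL q hqA hq2
          linarith
      exact ⟨p, hp, p, hp, rfl, rfl, le_refl _, le_refl _⟩
  · push_neg at hR
    obtain ⟨γ, hγ⟩ := hA.joinedIn c hcA d hdA
    have hmem : ∀ t ∈ Icc (0:ℝ) 1, γ.extend t ∈ A := fun t ht => by
      rw [γ.extend_apply ht]; exact hγ _
    have hp : p ∈ hatchY A := by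
      refine mem_hatchY_aux A p (-1) (by norm_num) γ.extend γ.continuous_extend hmem ?_ ?_ ?_ ?_ ?_
      · rw [γ.extend_zero]; linarith [hc.2]
      · rw [γ.extend_one]; linarith [hd.2]
      · rw [γ.extend_zero]; linarith [hc.1]
      · rw [γ.extend_one]; linarith [hd.1]
      · intro q hqA hq2
        have := hR q hqA hq2
        linarith
    exact ⟨p, hp, p, hp, rfl, rfl, le_refl _, le_refl _⟩
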